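/- Identification of the structural logit noise parameter: suppose for all (LPR, LLR) ∈ ℝ², 1/(1 + exp{(2Π_s(LPR,LLR,β*) − 1)/σ*}) = 1/(1 + exp{(2Π_s(LPR,LLR,β) − 1)/σ}) where Π_s(LPR,LLR,β) = 1/(1 + exp{−β₀ − β₁·LLR − β₂·LPR}) and σ, σ* > 0. Then taking the limit LPR → ∞ (with LLR fixed) forces Π_s → 1 for both parameterizations with β₂, β₂* > 0, and the limiting equality 1/(1+exp{1/σ*}) = 1/(1+exp{1/σ}) implies σ = σ*. -/

import Mathlib

open Real Filter

lemma post_tendsto (b0 b1 b2 L : ℝ) (hb2 : 0 < b2) :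
    Tendsto (fun LPR : ℝ => 1 / (1 + Real.exp (-b0 - b1 * L - b2 * LPR)))
      atTop (nhds 1) := by
  have h1 : Tendsto (fun LPR : ℝ => -b0 - b1 * L - b2 * LPR) atTop atBot := by
    have h0 : Tendsto (fun LPR : ℝ => b2 * LPR) atTop atTop :=
      Tendsto.const_mul_atTop hb2 tendsto_id
    have h2 : Tendsto (fun LPR : ℝ => -(b2 * LPR)) atTop atBot :=
      tendsto_neg_atTop_atBot.comp h0
    have := tendsto_atBot_add_const_left atTop (-b0 - b1 * L) h2
    simpa [sub_eq_add_neg] using this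
  have h2 : Tendsto (fun LPR : ℝ => Real.exp (-b0 - b1 * L - b2 * LPR)) atTop (nhds 0) :=
    Real.tendsto_exp_atBot.comp h1
  have h3 : Tendsto (fun LPR : ℝ => 1 + Real.exp (-b0 - b1 * L - b2 * LPR)) atTop (nhds 1) := by
    simpa using (tendsto_const_nhds (x := (1:ℝ))).add h2
  simpa using h3.inv₀ (by norm_num)

lemma arg_eq {x y : ℝ} (h : 1 / (1 + Real.exp x) = 1 / (1 + Real.exp y)) : x = y := by
  have hx : (0:ℝ) < 1 + Real.exp x := by positivity
  have hy : (0:ℝ) < 1 + Real.exp y := by positivity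
  field_simp at h
  exact Real.exp_injective (by linarith)

/-- Identification of the structural logit noise parameter: if the choice
probabilities coincide for all `(LPR, LLR)` and `β₂, β₂* > 0`, then as
`LPR → ∞` both subjective posteriors tend to 1, and `σ = σ*`. -/
theorem structural_logit_sigma_identified
    (σ σstar b0 b1 b2 b0s b1s b2s : ℝ)
    (hσ : 0 < σ) (hσs : 0 < σstar) (hb2 : 0 < b2) (hb2s : 0 < b2s)
    (heq : ∀ LPR LLR : ℝ,
      1 / (1 + Real.exp ((2 * (1 / (1 + Real.exp (-b0s - b1s * LLR - b2s * LPR))) - 1) / σstar)) =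
      1 / (1 + Real.exp ((2 * (1 / (1 + Real.exp (-b0 - b1 * LLR - b2 * LPR))) - 1) / σ))) :
    (∀ LLR : ℝ,
      Tendsto (fun LPR : ℝ => 1 / (1 + Real.exp (-b0 - b1 * LLR - b2 * LPR)))
        atTop (nhds 1) ∧
      Tendsto (fun LPR : ℝ => 1 / (1 + Real.exp (-b0s - b1s * LLR - b2s * LPR)))
        atTop (nhds 1)) ∧
    σstar = σ := by
  refine ⟨fun L => ⟨post_tendsto b0 b1 b2 L hb2, post_tendsto b0s b1s b2s L hb2s⟩, ?_⟩
  have hpt : ∀ LPR : ℝ,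
      (2 * (1 / (1 + Real.exp (-b0s - b1s * 0 - b2s * LPR))) - 1) / σstar =
      (2 * (1 / (1 + Real.exp (-b0 - b1 * 0 - b2 * LPR))) - 1) / σ :=
    fun LPR => arg_eq (heq LPR 0)
  have hL : Tendsto (fun LPR : ℝ =>
      (2 * (1 / (1 + Real.exp (-b0s - b1s * 0 - b2s * LPR))) - 1) / σstar)
      atTop (nhds ((2 * 1 - 1) / σstar)) :=
    (((post_tendsto b0s b1s b2s 0 hb2s).const_mul 2).sub tendsto_const_nhds).div_const σstar
  have hR : Tendsto (fun LPR : ℝ =>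
      (2 * (1 / (1 + Real.exp (-b0 - b1 * 0 - b2 * LPR))) - 1) / σ)
      atTop (nhds ((2 * 1 - 1) / σ)) :=
    (((post_tendsto b0 b1 b2 0 hb2).const_mul 2).sub tendsto_const_nhds).div_const σ
  have hR' : Tendsto (fun LPR : ℝ =>
      (2 * (1 / (1 + Real.exp (-b0s - b1s * 0 - b2s * LPR))) - 1) / σstar)
      atTop (nhds ((2 * 1 - 1) / σ)) := by
    exact hR.congr fun x => (hpt x).symm
  have h := tendsto_nhds_unique hL hR'
  have hσ' : σ ≠ 0 := ne_of_gt hσ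
  have hσs' : σstar ≠ 0 := ne_of_gt hσs
  norm_num at h
  exact h
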